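/- If s : 𝒳 → 𝒮 and t : 𝒴 → 𝒯 are both sufficient, then for every R ≥ 0 the information-bottleneck curve is preserved: ϑ_p(R) = ϑ_{pST}(R), where pST is the joint pmf on 𝒮 × 𝒯 induced by p. -/

import Mathlib

open Finset

noncomputable section
open scoped Classical

variable {𝒳 𝒴 𝒮 𝒯 : Type*}

/-- Marginal of a joint pmf on the first coordinate. -/
def margX [Fintype 𝒴] (p : 𝒳 × 𝒴 → ℝ) (x : 𝒳) : ℝ := ∑ y, p (x, y)

/-- Marginal of a joint pmf on the second coordinate. -/
def margY [Fintype 𝒳] (p : 𝒳 × 𝒴 → ℝ) (y : 𝒴) : ℝ := ∑ x, p (x, y)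

/-- Distribution of `S = s(X)`. -/
def margS [Fintype 𝒳] [Fintype 𝒴] (p : 𝒳 × 𝒴 → ℝ) (s : 𝒳 → 𝒮) (s0 : 𝒮) : ℝ :=
  ∑ x ∈ Finset.univ.filter (fun x => s x = s0), margX p x

/-- Distribution of `T = t(Y)`. -/
def margT [Fintype 𝒳] [Fintype 𝒴] (p : 𝒳 × 𝒴 → ℝ) (t : 𝒴 → 𝒯) (t0 : 𝒯) : ℝ :=
  ∑ y ∈ Finset.univ.filter (fun y => t y = t0), margY p y

/-- Joint distribution of `(S, T) = (s(X), t(Y))`. -/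
def margST [Fintype 𝒳] [Fintype 𝒴] (p : 𝒳 × 𝒴 → ℝ) (s : 𝒳 → 𝒮) (t : 𝒴 → 𝒯)
    (w : 𝒮 × 𝒯) : ℝ :=
  ∑ x ∈ Finset.univ.filter (fun x => s x = w.1),
    ∑ y ∈ Finset.univ.filter (fun y => t y = w.2), p (x, y)

/-- `q` is a probability mass function. -/
def IsPMF {Z : Type*} [Fintype Z] (q : Z → ℝ) : Prop := (∀ z, 0 ≤ q z) ∧ ∑ z, q z = 1

/-- `s` is a sufficient statistic of `X` for `Y` (Markov chain `X - S - Y`). -/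
def SuffS [Fintype 𝒴] (p : 𝒳 × 𝒴 → ℝ) (s : 𝒳 → 𝒮) : Prop :=
  ∀ x x' y, s x = s x' → p (x, y) * margX p x' = p (x', y) * margX p x

/-- `t` is a sufficient statistic of `Y` for `X` (Markov chain `X - T - Y`). -/
def SuffT [Fintype 𝒳] (p : 𝒳 × 𝒴 → ℝ) (t : 𝒴 → 𝒯) : Prop :=
  ∀ x y y', t y = t y' → p (x, y) * margY p y' = p (x, y') * margY p y

/-- Mutual information of a joint pmf on `A × B`. -/
def mutInfo {A B : Type*} [Fintype A] [Fintype B] (q : A × B → ℝ) : ℝ :=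
  ∑ z : A × B, if 0 < q z then
    q z * Real.log (q z / ((∑ b, q (z.1, b)) * (∑ a, q (a, z.2)))) else 0

/-- Shannon entropy of a pmf on a finite type. -/
def entropy {W : Type*} [Fintype W] (r : W → ℝ) : ℝ :=
  -∑ w, if 0 < r w then r w * Real.log (r w) else 0

/-- Wyner's common information of a joint pmf `m` on `A × B`. -/
def wynerCI {A B : Type*} [Fintype A] [Fintype B] (m : A × B → ℝ) : ℝ :=
  sInf { c | ∃ (n : ℕ) (q : A × B × Fin n → ℝ),
    IsPMF q ∧
    (∀ a b, ∑ w, q (a, b, w) = m (a, b)) ∧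
    (∀ a b w, q (a, b, w) * (∑ a', ∑ b', q (a', b', w)) =
      (∑ b', q (a, b', w)) * (∑ a', q (a', b, w))) ∧
    c = mutInfo (fun z : Fin n × (A × B) => q (z.2.1, z.2.2, z.1)) }

/-- Gács–Körner common information of a joint pmf `m` on `A × B`. -/
def gkCI {A B : Type*} [Fintype A] [Fintype B] (m : A × B → ℝ) : ℝ :=
  sSup { c | ∃ (n : ℕ) (f : A → Fin n) (g : B → Fin n),
    (∑ z : A × B, if f z.1 ≠ g z.2 then m z else 0) = 0 ∧
    c = entropy (fun w : Fin n =>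
      ∑ a ∈ Finset.univ.filter (fun a => f a = w), ∑ b, m (a, b)) }

/-- Information-bottleneck Lagrangian value. -/
def ibL {A B : Type*} [Fintype A] [Fintype B] (m : A × B → ℝ) (β : ℝ) : ℝ :=
  sInf { c | ∃ (n : ℕ) (r : A → Fin n → ℝ),
    (∀ a u, 0 ≤ r a u) ∧ (∀ a, ∑ u, r a u = 1) ∧
    c = mutInfo (fun z : Fin n × A => r z.2 z.1 * ∑ b, m (z.2, b))
        - β * mutInfo (fun z : Fin n × B => ∑ a, r a z.1 * m (a, z.2)) }

/-- Information-bottleneck curve. -/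
def ibCurve {A B : Type*} [Fintype A] [Fintype B] (m : A × B → ℝ) (R : ℝ) : ℝ :=
  sSup { c | ∃ (n : ℕ) (r : A → Fin n → ℝ),
    (∀ a u, 0 ≤ r a u) ∧ (∀ a, ∑ u, r a u = 1) ∧
    mutInfo (fun z : Fin n × A => r z.2 z.1 * ∑ b, m (z.2, b)) ≤ R ∧
    c = mutInfo (fun z : Fin n × B => ∑ a, r a z.1 * m (a, z.2)) }


section IBHelpers

lemma ite_pos_mul (a L : ℝ) (ha : 0 ≤ a) : (if 0 < a then a * L else 0) = a * L := by
  rcases lt_or_eq_of_le ha with h | h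
  · simp [h]
  · simp [← h]

lemma mutInfo_eq_of_nonneg {A B : Type*} [Fintype A] [Fintype B]
    (q : A × B → ℝ) (hq : ∀ z, 0 ≤ q z) :
    mutInfo q = ∑ z : A × B,
      q z * Real.log (q z / ((∑ b, q (z.1, b)) * (∑ a, q (a, z.2)))) := by
  unfold mutInfo
  exact Finset.sum_congr rfl fun z _ => ite_pos_mul _ _ (hq z)

lemma kl_nonneg {A : Type*} [Fintype A] (fq g : A → ℝ) (hf : ∀ z, 0 ≤ fq z)
    (hg : ∀ z, 0 ≤ g z)
    (hsum : ∑ z, g z ≤ ∑ z, fq z) (hpos : ∀ z, 0 < fq z → 0 < g z) :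
    0 ≤ ∑ z, fq z * Real.log (fq z / g z) := by
  have key : ∀ z, fq z - g z ≤ fq z * Real.log (fq z / g z) := by
    intro z
    rcases lt_or_eq_of_le (hf z) with h | h
    · have hgz := hpos z h
      have h1 : Real.log (g z / fq z) ≤ g z / fq z - 1 :=
        Real.log_le_sub_one_of_pos (by positivity)
      have h2 : Real.log (fq z / g z) = - Real.log (g z / fq z) := by
        rw [← Real.log_inv]; congr 1; field_simp
      nlinarith [mul_le_mul_of_nonneg_left h1 (le_of_lt h), mul_div_cancel₀ (g z) (ne_of_gt h)]
    · rw [← h]; simpa using hg z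
  calc (0:ℝ) = ∑ z, fq z - ∑ z, fq z := by ring
  _ ≤ ∑ z, fq z - ∑ z, g z := by linarith
  _ = ∑ z, (fq z - g z) := by rw [Finset.sum_sub_distrib]
  _ ≤ _ := Finset.sum_le_sum fun z _ => key z

variable {A B C : Type*} [Fintype A] [Fintype B] [Fintype C]

lemma mutInfo_collapse_expand (q : A × B → ℝ) (f : B → C) (hq : ∀ z, 0 ≤ q z) :
    mutInfo (fun w : A × C => ∑ y ∈ Finset.univ.filter (fun y => f y = w.2), q (w.1, y)) =
    ∑ z : A × B, q z * Real.log
      ((∑ y' ∈ Finset.univ.filter (fun y => f y = f z.2), q (z.1, y')) /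
       ((∑ y, q (z.1, y)) *
        (∑ a, ∑ y' ∈ Finset.univ.filter (fun y => f y = f z.2), q (a, y')))) := by
  have hQ : ∀ w : A × C, 0 ≤ ∑ y ∈ Finset.univ.filter (fun y => f y = w.2), q (w.1, y) :=
    fun w => Finset.sum_nonneg fun y _ => hq _
  rw [mutInfo_eq_of_nonneg _ hQ]
  rw [Fintype.sum_prod_type, Fintype.sum_prod_type]
  apply Finset.sum_congr rfl
  intro u _
  have hrow : (∑ c, ∑ y ∈ Finset.univ.filter (fun y => f y = c), q (u, y)) = ∑ y, q (u, y) :=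
    Finset.sum_fiberwise _ _ _
  rw [← Finset.sum_fiberwise Finset.univ f (fun y => q (u, y) *
      Real.log ((∑ y' ∈ Finset.univ.filter (fun y' => f y' = f y), q (u, y')) /
        ((∑ y', q (u, y')) *
         (∑ a, ∑ y' ∈ Finset.univ.filter (fun y' => f y' = f y), q (a, y')))))]
  simp only [hrow]
  apply Finset.sum_congr rfl
  intro c _
  rw [Finset.sum_mul]
  exact Finset.sum_congr rfl fun y hy => by rw [(Finset.mem_filter.mp hy).2]

lemma collapse_pos_facts (q : A × B → ℝ) (f : B → C) (hq : ∀ z, 0 ≤ q z)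
    {u : A} {y : B} (h : 0 < q (u, y)) :
    0 < (∑ y', q (u, y')) ∧ 0 < (∑ a, q (a, y)) ∧
    0 < (∑ y' ∈ Finset.univ.filter (fun y' => f y' = f y), q (u, y')) ∧
    0 < (∑ a, ∑ y' ∈ Finset.univ.filter (fun y' => f y' = f y), q (a, y')) := by
  have hrow : 0 < ∑ y', q (u, y') :=
    lt_of_lt_of_le h (Finset.single_le_sum (fun i _ => hq (u, i)) (Finset.mem_univ y))
  have hcol : 0 < ∑ a, q (a, y) :=
    lt_of_lt_of_le h (Finset.single_le_sum (fun i _ => hq (i, y)) (Finset.mem_univ u))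
  have hQ : 0 < ∑ y' ∈ Finset.univ.filter (fun y' => f y' = f y), q (u, y') :=
    lt_of_lt_of_le h (Finset.single_le_sum (fun i _ => hq (u, i))
      (Finset.mem_filter.mpr ⟨Finset.mem_univ y, rfl⟩))
  have hQC : 0 < ∑ a, ∑ y' ∈ Finset.univ.filter (fun y' => f y' = f y), q (a, y') :=
    lt_of_lt_of_le hQ (Finset.single_le_sum
      (fun a _ => Finset.sum_nonneg fun y' _ => hq (a, y')) (Finset.mem_univ u))
  exact ⟨hrow, hcol, hQ, hQC⟩

lemma colsum_fiber (q : A × B → ℝ) (f : B → C) (c : C) :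
    (∑ a, ∑ y' ∈ Finset.univ.filter (fun y' => f y' = c), q (a, y')) =
    ∑ y' ∈ Finset.univ.filter (fun y' => f y' = c), ∑ a, q (a, y') :=
  Finset.sum_comm

lemma mutInfo_collapse_eq (q : A × B → ℝ) (f : B → C) (hq : ∀ z, 0 ≤ q z)
    (hsuff : ∀ u y y', f y = f y' →
      q (u, y) * (∑ u', q (u', y')) = q (u, y') * (∑ u', q (u', y))) :
    mutInfo (fun w : A × C => ∑ y ∈ Finset.univ.filter (fun y => f y = w.2), q (w.1, y)) =
    mutInfo q := by
  rw [mutInfo_collapse_expand q f hq, mutInfo_eq_of_nonneg q hq]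
  apply Finset.sum_congr rfl
  rintro ⟨u, y⟩ _
  rcases lt_or_eq_of_le (hq (u, y)) with h | h
  · obtain ⟨hrow, hcol, hQ, hQC⟩ := collapse_pos_facts q f hq h
    have key : (∑ y' ∈ Finset.univ.filter (fun y' => f y' = f y), q (u, y')) * (∑ a, q (a, y)) =
        q (u, y) * (∑ a, ∑ y' ∈ Finset.univ.filter (fun y' => f y' = f y), q (a, y')) := by
      rw [colsum_fiber, Finset.sum_mul, Finset.mul_sum]
      exact Finset.sum_congr rfl fun y' hy' =>
        hsuff u y' y (Finset.mem_filter.mp hy').2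
    congr 1
    congr 1
    rw [div_eq_div_iff (by positivity) (by positivity)]
    nlinarith [key]
  · simp [← h]

lemma mutInfo_collapse_le (q : A × B → ℝ) (f : B → C) (hq : ∀ z, 0 ≤ q z) :
    mutInfo (fun w : A × C => ∑ y ∈ Finset.univ.filter (fun y => f y = w.2), q (w.1, y)) ≤
    mutInfo q := by
  rw [mutInfo_collapse_expand q f hq, mutInfo_eq_of_nonneg q hq, ← sub_nonneg,
    ← Finset.sum_sub_distrib]
  set g : A × B → ℝ := fun z => (∑ a, q (a, z.2)) *
      (∑ y' ∈ Finset.univ.filter (fun y' => f y' = f z.2), q (z.1, y')) /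
      (∑ a, ∑ y' ∈ Finset.univ.filter (fun y' => f y' = f z.2), q (a, y')) with hgdef
  have hg : ∀ z, 0 ≤ g z := by
    intro z
    apply div_nonneg
    · exact mul_nonneg (Finset.sum_nonneg fun a _ => hq _)
        (Finset.sum_nonneg fun y' _ => hq _)
    · exact Finset.sum_nonneg fun a _ => Finset.sum_nonneg fun y' _ => hq _
  have hstep : ∀ z : A × B,
      q z * Real.log (q z / ((∑ b, q (z.1, b)) * (∑ a, q (a, z.2)))) -
      q z * Real.log ((∑ y' ∈ Finset.univ.filter (fun y' => f y' = f z.2), q (z.1, y')) /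
       ((∑ y', q (z.1, y')) *
        (∑ a, ∑ y' ∈ Finset.univ.filter (fun y' => f y' = f z.2), q (a, y')))) =
      q z * Real.log (q z / g z) := by
    rintro ⟨u, y⟩
    rcases lt_or_eq_of_le (hq (u, y)) with h | h
    · obtain ⟨hrow, hcol, hQ, hQC⟩ := collapse_pos_facts q f hq h
      rw [← mul_sub]
      congr 1
      rw [← Real.log_div (by positivity) (by positivity)]
      congr 1
      simp only [hgdef]
      field_simp
    · simp [← h]
  rw [Finset.sum_congr rfl fun z _ => hstep z]
  refine kl_nonneg q g hq hg ?_ ?_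
  · rw [Fintype.sum_prod_type_right, Fintype.sum_prod_type_right]
    apply Finset.sum_le_sum
    intro y _
    have : ∀ u : A, g (u, y) = (∑ a, q (a, y)) *
        (∑ y' ∈ Finset.univ.filter (fun y' => f y' = f y), q (u, y')) /
        (∑ a, ∑ y' ∈ Finset.univ.filter (fun y' => f y' = f y), q (a, y')) := fun u => rfl
    simp only [this]
    rcases eq_or_lt_of_le (Finset.sum_nonneg (fun a (_ : a ∈ Finset.univ) =>
        Finset.sum_nonneg fun y' _ => hq (a, y'))
        : (0:ℝ) ≤ ∑ a, ∑ y' ∈ Finset.univ.filter (fun y' => f y' = f y), q (a, y'))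
      with (hz | hz)
    · rw [← hz]
      simp only [div_zero, Finset.sum_const, smul_zero]
      exact Finset.sum_nonneg fun a _ => hq _
    · rw [← Finset.sum_div, ← Finset.mul_sum, mul_div_assoc, div_self (ne_of_gt hz), mul_one]
  · rintro ⟨u, y⟩ h
    obtain ⟨hrow, hcol, hQ, hQC⟩ := collapse_pos_facts q f hq h
    exact div_pos (mul_pos hcol hQ) hQC

end IBHelpers

section IBDomain
variable [Fintype 𝒳] [Fintype 𝒴] [Fintype 𝒮] [Fintype 𝒯]

lemma margST_rowsum (p : 𝒳 × 𝒴 → ℝ) (s : 𝒳 → 𝒮) (t : 𝒴 → 𝒯) (s0 : 𝒮) :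
    ∑ t0, margST p s t (s0, t0) = margS p s s0 := by
  calc ∑ t0, margST p s t (s0, t0)
      = ∑ t0, ∑ x ∈ Finset.univ.filter (fun x => s x = s0),
          ∑ y ∈ Finset.univ.filter (fun y => t y = t0), p (x, y) := rfl
    _ = ∑ x ∈ Finset.univ.filter (fun x => s x = s0),
          ∑ t0, ∑ y ∈ Finset.univ.filter (fun y => t y = t0), p (x, y) := Finset.sum_comm
    _ = ∑ x ∈ Finset.univ.filter (fun x => s x = s0), ∑ y, p (x, y) :=
          Finset.sum_congr rfl fun x _ => Finset.sum_fiberwise Finset.univ t (fun y => p (x, y))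
    _ = margS p s s0 := rfl

lemma margS_fiber_empty (p : 𝒳 × 𝒴 → ℝ) (hX : ∀ x, 0 < margX p x)
    (s : 𝒳 → 𝒮) (s0 : 𝒮) (h : ¬ 0 < margS p s s0) :
    Finset.univ.filter (fun x => s x = s0) = ∅ := by
  by_contra hne
  obtain ⟨x, hx⟩ := Finset.nonempty_iff_ne_empty.mpr hne
  exact h (lt_of_lt_of_le (hX x)
    (Finset.single_le_sum (fun i _ => le_of_lt (hX i)) hx))

lemma key_suff (p : 𝒳 × 𝒴 → ℝ) (s : 𝒳 → 𝒮) (t : 𝒴 → 𝒯) (hs : SuffS p s)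
    (x : 𝒳) (t0 : 𝒯) :
    margX p x * margST p s t (s x, t0) =
    (∑ y ∈ Finset.univ.filter (fun y => t y = t0), p (x, y)) * margS p s (s x) := by
  have e1 : margST p s t (s x, t0) = ∑ x' ∈ Finset.univ.filter (fun x' => s x' = s x),
      ∑ y ∈ Finset.univ.filter (fun y => t y = t0), p (x', y) := rfl
  have e2 : margS p s (s x) = ∑ x' ∈ Finset.univ.filter (fun x' => s x' = s x),
      margX p x' := rfl
  rw [e1, e2, Finset.mul_sum, Finset.mul_sum]
  apply Finset.sum_congr rfl
  intro x' hx'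
  have hsx : s x = s x' := ((Finset.mem_filter.mp hx').2).symm
  rw [Finset.mul_sum, Finset.sum_mul]
  apply Finset.sum_congr rfl
  intro y _
  have h0 := hs x x' y hsx
  linarith [h0]

lemma colsum_q2 {n : ℕ} (p : 𝒳 × 𝒴 → ℝ) (rr : 𝒳 → Fin n → ℝ)
    (hr1 : ∀ x, ∑ u, rr x u = 1) (y : 𝒴) :
    (∑ u, ∑ x, rr x u * p (x, y)) = ∑ x, p (x, y) := by
  rw [Finset.sum_comm]
  exact Finset.sum_congr rfl fun x _ => by rw [← Finset.sum_mul, hr1, one_mul]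

lemma q2_suff {n : ℕ} (p : 𝒳 × 𝒴 → ℝ) (t : 𝒴 → 𝒯) (ht : SuffT p t)
    (rr : 𝒳 → Fin n → ℝ) (hr1 : ∀ x, ∑ u, rr x u = 1) :
    ∀ (u : Fin n) (y y' : 𝒴), t y = t y' →
      (∑ x, rr x u * p (x, y)) * (∑ u', ∑ x, rr x u' * p (x, y')) =
      (∑ x, rr x u * p (x, y')) * (∑ u', ∑ x, rr x u' * p (x, y)) := by
  intro u y y' h
  rw [colsum_q2 p rr hr1 y, colsum_q2 p rr hr1 y', Finset.sum_mul, Finset.sum_mul]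
  apply Finset.sum_congr rfl
  intro x _
  have h0 := ht x y y' h
  unfold margY at h0
  rw [mul_assoc, mul_assoc, h0]

lemma collapse_q2_lift {n : ℕ} (p : 𝒳 × 𝒴 → ℝ) (s : 𝒳 → 𝒮) (t : 𝒴 → 𝒯)
    (r : 𝒮 → Fin n → ℝ) (u : Fin n) (t0 : 𝒯) :
    ∑ y ∈ Finset.univ.filter (fun y => t y = t0), ∑ x, r (s x) u * p (x, y) =
    ∑ s0, r s0 u * margST p s t (s0, t0) := by
  calc ∑ y ∈ Finset.univ.filter (fun y => t y = t0), ∑ x, r (s x) u * p (x, y)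
      = ∑ x, ∑ y ∈ Finset.univ.filter (fun y => t y = t0), r (s x) u * p (x, y) :=
        Finset.sum_comm
    _ = ∑ s0, ∑ x ∈ Finset.univ.filter (fun x => s x = s0),
          ∑ y ∈ Finset.univ.filter (fun y => t y = t0), r (s x) u * p (x, y) :=
        (Finset.sum_fiberwise Finset.univ s (fun x =>
          ∑ y ∈ Finset.univ.filter (fun y => t y = t0), r (s x) u * p (x, y))).symm
    _ = ∑ s0, r s0 u * margST p s t (s0, t0) := by
        apply Finset.sum_congr rfl
        intro s0 _
        have e1 : margST p s t (s0, t0) = ∑ x ∈ Finset.univ.filter (fun x => s x = s0),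
            ∑ y ∈ Finset.univ.filter (fun y => t y = t0), p (x, y) := rfl
        rw [e1, Finset.mul_sum]
        apply Finset.sum_congr rfl
        intro x hx
        rw [Finset.mul_sum]
        exact Finset.sum_congr rfl fun y _ => by rw [(Finset.mem_filter.mp hx).2]

end IBDomain

/-- The information-bottleneck curve is preserved under sufficient
statistics. -/
theorem ib_curve_preserved
    [Fintype 𝒳] [Nonempty 𝒳] [Fintype 𝒴] [Nonempty 𝒴]
    [Fintype 𝒮] [Nonempty 𝒮] [Fintype 𝒯] [Nonempty 𝒯]
    (p : 𝒳 × 𝒴 → ℝ) (hp : IsPMF p)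
    (hX : ∀ x, 0 < margX p x) (hY : ∀ y, 0 < margY p y)
    (s : 𝒳 → 𝒮) (t : 𝒴 → 𝒯)
    (hs : SuffS p s) (ht : SuffT p t)
    (R : ℝ) (hR : 0 ≤ R) :
    ibCurve p R = ibCurve (margST p s t) R := by
  obtain ⟨hp0, hp1⟩ := hp
  unfold ibCurve
  congr 1
  ext c
  simp only [Set.mem_setOf_eq]
  constructor
  · -- from a kernel on 𝒳, build a kernel on 𝒮
    rintro ⟨n, r, hr0, hr1, hcon, rfl⟩
    have hn0 : n ≠ 0 := by
      intro h0
      subst h0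
      simpa using hr1 (Classical.arbitrary 𝒳)
    have hn : (n : ℝ) ≠ 0 := Nat.cast_ne_zero.mpr hn0
    set r' : 𝒮 → Fin n → ℝ := fun s0 u =>
      if 0 < margS p s s0 then
        (∑ x ∈ Finset.univ.filter (fun x => s x = s0), r x u * margX p x) / margS p s s0
      else (n : ℝ)⁻¹ with hr'def
    have hr'0 : ∀ s0 u, 0 ≤ r' s0 u := by
      intro s0 u
      simp only [hr'def]
      split_ifs with h
      · exact div_nonneg (Finset.sum_nonneg fun x _ =>
          mul_nonneg (hr0 x u) (le_of_lt (hX x))) (le_of_lt h)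
      · positivity
    have hr'1 : ∀ s0, ∑ u, r' s0 u = 1 := by
      intro s0
      simp only [hr'def]
      split_ifs with h
      · rw [← Finset.sum_div, Finset.sum_comm]
        have e : ∀ x, (∑ u : Fin n, r x u * margX p x) = margX p x := fun x => by
          rw [← Finset.sum_mul, hr1, one_mul]
        rw [Finset.sum_congr rfl fun x _ => e x]
        exact div_self (ne_of_gt h)
      · rw [Finset.sum_const, Finset.card_univ, Fintype.card_fin, nsmul_eq_mul]
        exact mul_inv_cancel₀ hn
    have hq1 : ∀ z : Fin n × 𝒳, 0 ≤ r z.2 z.1 * margX p z.2 :=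
      fun z => mul_nonneg (hr0 _ _) (le_of_lt (hX z.2))
    have hq2 : ∀ z : Fin n × 𝒴, 0 ≤ ∑ x, r x z.1 * p (x, z.2) :=
      fun z => Finset.sum_nonneg fun x _ => mul_nonneg (hr0 _ _) (hp0 _)
    refine ⟨n, r', hr'0, hr'1, ?_, ?_⟩
    · -- constraint
      have eS : (fun z : Fin n × 𝒮 => r' z.2 z.1 * ∑ b, margST p s t (z.2, b)) =
          (fun w : Fin n × 𝒮 => ∑ x ∈ Finset.univ.filter (fun x => s x = w.2),
            r x w.1 * margX p x) := by
        funext w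
        obtain ⟨u, s0⟩ := w
        simp only [hr'def]
        rw [margST_rowsum p s t s0]
        split_ifs with h
        · rw [div_mul_cancel₀ _ (ne_of_gt h)]
        · have hemp := margS_fiber_empty p hX s s0 h
          have hz : margS p s s0 = 0 := by
            rw [show margS p s s0 =
              ∑ x ∈ Finset.univ.filter (fun x => s x = s0), margX p x from rfl,
              hemp, Finset.sum_empty]
          rw [hz, mul_zero, hemp, Finset.sum_empty]
      have h1 := mutInfo_collapse_le (fun z : Fin n × 𝒳 => r z.2 z.1 * margX p z.2) s hq1
      exact le_trans (le_of_eq (congrArg mutInfo eS)) (le_trans h1 hcon)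
    · -- value of the curve
      have h4 := mutInfo_collapse_eq (fun z : Fin n × 𝒴 => ∑ x, r x z.1 * p (x, z.2)) t hq2
        (q2_suff p t ht r hr1)
      have eT : (fun z : Fin n × 𝒯 => ∑ a, r' a z.1 * margST p s t (a, z.2)) =
          (fun w : Fin n × 𝒯 => ∑ y ∈ Finset.univ.filter (fun y => t y = w.2),
            ∑ x, r x w.1 * p (x, y)) := by
        funext w
        obtain ⟨u, t0⟩ := w
        dsimp only
        calc ∑ s0, r' s0 u * margST p s t (s0, t0)
            = ∑ s0, ∑ x ∈ Finset.univ.filter (fun x => s x = s0),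
                r x u * ∑ y ∈ Finset.univ.filter (fun y => t y = t0), p (x, y) := by
              apply Finset.sum_congr rfl
              intro s0 _
              simp only [hr'def]
              split_ifs with h
              · rw [div_mul_eq_mul_div, div_eq_iff (ne_of_gt h), Finset.sum_mul,
                  Finset.sum_mul]
                apply Finset.sum_congr rfl
                intro x hx
                have hsx : s x = s0 := (Finset.mem_filter.mp hx).2
                have k := key_suff p s t hs x t0
                rw [hsx] at k
                rw [mul_assoc, mul_assoc, k]
              · have hemp := margS_fiber_empty p hX s s0 h
                have hz : margST p s t (s0, t0) = 0 := by
                  rw [show margST p s t (s0, t0) =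
                    ∑ x ∈ Finset.univ.filter (fun x => s x = s0),
                      ∑ y ∈ Finset.univ.filter (fun y => t y = t0), p (x, y) from rfl,
                    hemp, Finset.sum_empty]
                rw [hz, mul_zero, hemp, Finset.sum_empty]
          _ = ∑ x, r x u * ∑ y ∈ Finset.univ.filter (fun y => t y = t0), p (x, y) :=
              Finset.sum_fiberwise Finset.univ s (fun x =>
                r x u * ∑ y ∈ Finset.univ.filter (fun y => t y = t0), p (x, y))
          _ = ∑ x, ∑ y ∈ Finset.univ.filter (fun y => t y = t0), r x u * p (x, y) :=
              Finset.sum_congr rfl fun x _ => Finset.mul_sum _ _ _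
          _ = ∑ y ∈ Finset.univ.filter (fun y => t y = t0), ∑ x, r x u * p (x, y) :=
              Finset.sum_comm
      exact ((congrArg mutInfo eT).trans h4).symm
  · -- from a kernel on 𝒮, build a kernel on 𝒳
    rintro ⟨n, r, hr0, hr1, hcon, rfl⟩
    refine ⟨n, fun x => r (s x), fun x u => hr0 _ u, fun x => hr1 _, ?_, ?_⟩
    · -- constraint
      have hq1 : ∀ z : Fin n × 𝒳, 0 ≤ r (s z.2) z.1 * margX p z.2 :=
        fun z => mul_nonneg (hr0 _ _) (le_of_lt (hX z.2))
      have hsuff1 : ∀ (u : Fin n) (x x' : 𝒳), s x = s x' →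
          (r (s x) u * margX p x) * (∑ u', r (s x') u' * margX p x') =
          (r (s x') u * margX p x') * (∑ u', r (s x) u' * margX p x) := by
        intro u x x' h
        rw [← Finset.sum_mul, hr1, one_mul, ← Finset.sum_mul, hr1, one_mul, h]
        ring
      have h1 := mutInfo_collapse_eq (fun z : Fin n × 𝒳 => r (s z.2) z.1 * margX p z.2)
        s hq1 hsuff1
      have eS : (fun z : Fin n × 𝒮 => r z.2 z.1 * ∑ b, margST p s t (z.2, b)) =
          (fun w : Fin n × 𝒮 => ∑ x ∈ Finset.univ.filter (fun x => s x = w.2),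
            r (s x) w.1 * margX p x) := by
        funext w
        obtain ⟨u, s0⟩ := w
        dsimp only
        rw [margST_rowsum p s t s0]
        rw [show margS p s s0 =
          ∑ x ∈ Finset.univ.filter (fun x => s x = s0), margX p x from rfl, Finset.mul_sum]
        exact Finset.sum_congr rfl fun x hx => by rw [(Finset.mem_filter.mp hx).2]
      exact (h1.symm.trans (congrArg mutInfo eS).symm).trans_le hcon
    · -- value of the curve
      have hq2 : ∀ z : Fin n × 𝒴, 0 ≤ ∑ x, r (s x) z.1 * p (x, z.2) :=
        fun z => Finset.sum_nonneg fun x _ => mul_nonneg (hr0 _ _) (hp0 _)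
      have h4 := mutInfo_collapse_eq (fun z : Fin n × 𝒴 => ∑ x, r (s x) z.1 * p (x, z.2))
        t hq2 (q2_suff p t ht (fun x => r (s x)) (fun x => hr1 _))
      have eT : (fun z : Fin n × 𝒯 => ∑ a, r a z.1 * margST p s t (a, z.2)) =
          (fun w : Fin n × 𝒯 => ∑ y ∈ Finset.univ.filter (fun y => t y = w.2),
            ∑ x, r (s x) w.1 * p (x, y)) := by
        funext w
        obtain ⟨u, t0⟩ := w
        exact (collapse_q2_lift p s t r u t0).symm
      exact (congrArg mutInfo eT).trans h4

end
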